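/- The Cobb-Douglas function f(x) = ∏_{i=1}^n x_i^{α_i} with α_i > 0 and ∑_i α_i ≤ 1 is concave on the nonnegative orthant. -/
import Mathlib

open Finset Real

lemma cobb_aux {n : ℕ} (α z : Fin n → ℝ) (hα : ∀ i, 0 ≤ α i) (hsum : ∑ i, α i ≤ 1)
    (hz : ∀ i, 0 ≤ z i) :
    ∏ i, z i ^ α i ≤ ∑ i, α i * z i + (1 - ∑ i, α i) := by
  set w : Option (Fin n) → ℝ := fun o => o.elim (1 - ∑ i, α i) α with hw
  set zz : Option (Fin n) → ℝ := fun o => o.elim 1 z with hzz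
  have key := Real.geom_mean_le_arith_mean_weighted Finset.univ w zz
    (fun o _ => by cases o with
      | none => simpa [w] using hsum
      | some i => exact hα i)
    (by simp [w, Fintype.sum_option])
    (fun o _ => by cases o with
      | none => norm_num [zz]
      | some i => exact hz i)
  rw [Fintype.prod_option, Fintype.sum_option] at key
  simp only [w, zz, Option.elim] at key
  rw [Real.one_rpow, one_mul, mul_one] at key
  linarith
/-- The Cobb-Douglas function with positive exponents summing to at most 1 is concave on
the nonnegative orthant. -/
theorem cobb_douglas_concaveOn
    (n : ℕ) (hn : 1 ≤ n) (α : Fin n → ℝ) (hα : ∀ i, 0 < α i) (hsum : ∑ i, α i ≤ 1) :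
    ConcaveOn ℝ {x : Fin n → ℝ | ∀ i, 0 ≤ x i} (fun x => ∏ i, (x i) ^ (α i)) := by
  constructor
  · intro x hx y hy a b ha hb hab i
    exact add_nonneg (mul_nonneg ha (hx i)) (mul_nonneg hb (hy i))
  intro x hx y hy a b ha hb hab
  rcases eq_or_lt_of_le ha with ha0 | ha
  · have hb1 : b = 1 := by linarith
    simp [← ha0, hb1]
  rcases eq_or_lt_of_le hb with hb0 | hb
  · have : a = 1 := by linarith
    simp [← hb0, this]
  set c : Fin n → ℝ := fun i => a * x i + b * y i with hc
  have hcnn : ∀ i, 0 ≤ c i := fun i =>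
    add_nonneg (mul_nonneg ha.le (hx i)) (mul_nonneg hb.le (hy i))
  by_cases hzero : ∃ i, c i = 0
  · obtain ⟨i, hi⟩ := hzero
    have h2 : a * x i = 0 ∧ b * y i = 0 :=
      (add_eq_zero_iff_of_nonneg (mul_nonneg ha.le (hx i)) (mul_nonneg hb.le (hy i))).mp hi
    have hxi : x i = 0 := by
      rcases mul_eq_zero.mp h2.1 with h | h
      exacts [absurd h ha.ne', h]
    have hyi : y i = 0 := by
      rcases mul_eq_zero.mp h2.2 with h | h
      exacts [absurd h hb.ne', h]
    have px : (∏ j, x j ^ α j) = 0 :=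
      Finset.prod_eq_zero (Finset.mem_univ i) (by rw [hxi]; exact Real.zero_rpow (hα i).ne')
    have py : (∏ j, y j ^ α j) = 0 :=
      Finset.prod_eq_zero (Finset.mem_univ i) (by rw [hyi]; exact Real.zero_rpow (hα i).ne')
    have pc : (∏ j, c j ^ α j) = 0 :=
      Finset.prod_eq_zero (Finset.mem_univ i) (by rw [hi]; exact Real.zero_rpow (hα i).ne')
    simp only [smul_eq_mul, px, py, mul_zero, add_zero]
    exact le_of_eq pc.symm
  push_neg at hzero
  have hcpos : ∀ i, 0 < c i := fun i => lt_of_le_of_ne (hcnn i) (Ne.symm (hzero i))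
  -- a * ∏ x^α + b * ∏ y^α ≤ ∏ c^α
  have hpc : 0 < ∏ i, c i ^ α i :=
    Finset.prod_pos fun i _ => Real.rpow_pos_of_pos (hcpos i) _
  have hx' : ∏ i, x i ^ α i = (∏ i, c i ^ α i) * ∏ i, (x i / c i) ^ α i := by
    rw [← Finset.prod_mul_distrib]
    refine Finset.prod_congr rfl fun i _ => ?_
    rw [← Real.mul_rpow (hcnn i) (div_nonneg (hx i) (hcnn i)),
      mul_div_cancel₀ _ (hzero i)]
  have hy' : ∏ i, y i ^ α i = (∏ i, c i ^ α i) * ∏ i, (y i / c i) ^ α i := by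
    rw [← Finset.prod_mul_distrib]
    refine Finset.prod_congr rfl fun i _ => ?_
    rw [← Real.mul_rpow (hcnn i) (div_nonneg (hy i) (hcnn i)),
      mul_div_cancel₀ _ (hzero i)]
  have hgx := cobb_aux α (fun i => x i / c i) (fun i => (hα i).le) hsum
    (fun i => div_nonneg (hx i) (hcnn i))
  have hgy := cobb_aux α (fun i => y i / c i) (fun i => (hα i).le) hsum
    (fun i => div_nonneg (hy i) (hcnn i))
  have hcomb : a * (∑ i, α i * (x i / c i) + (1 - ∑ i, α i))
      + b * (∑ i, α i * (y i / c i) + (1 - ∑ i, α i)) = 1 := by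
    have : a * (∑ i, α i * (x i / c i)) + b * (∑ i, α i * (y i / c i)) = ∑ i, α i := by
      rw [Finset.mul_sum, Finset.mul_sum, ← Finset.sum_add_distrib]
      refine Finset.sum_congr rfl fun i _ => ?_
      have he : a * (α i * (x i / c i)) + b * (α i * (y i / c i))
          = α i * ((a * x i + b * y i) / c i) := by ring
      rw [he]
      have : (a * x i + b * y i) / c i = 1 := div_self (hzero i)
      rw [this, mul_one]
    nlinarith
  calc a • ∏ i, x i ^ α i + b • ∏ i, y i ^ α i
      = (∏ i, c i ^ α i) * (a * ∏ i, (x i / c i) ^ α i + b * ∏ i, (y i / c i) ^ α i) := by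
        rw [smul_eq_mul, smul_eq_mul, hx', hy']; ring
    _ ≤ (∏ i, c i ^ α i) * 1 := by
        refine mul_le_mul_of_nonneg_left ?_ hpc.le
        calc a * ∏ i, (x i / c i) ^ α i + b * ∏ i, (y i / c i) ^ α i
            ≤ a * (∑ i, α i * (x i / c i) + (1 - ∑ i, α i))
              + b * (∑ i, α i * (y i / c i) + (1 - ∑ i, α i)) := by
              gcongr
          _ = 1 := hcomb
    _ = ∏ i, c i ^ α i := mul_one _
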